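/- The identity e = f + g defines a one-to-one correspondence between vectors e = (a,b) in Z^2 with gcd(a,b) = 1 and ab ≠ 0, and direct acute bases (f,g) of Z^2, i.e. pairs (f,g) of integer vectors with det(f,g) = 1 and ⟨f,g⟩ ≥ 0. -/

import Mathlib

/-- Determinant of the 2×2 matrix with columns `f`, `g`. -/
def det2 (f g : ℤ × ℤ) : ℤ := f.1 * g.2 - f.2 * g.1

/-- Euclidean inner product on `ℤ²`. -/
def ip2 (f g : ℤ × ℤ) : ℤ := f.1 * g.1 + f.2 * g.2

/-- A direct acute basis of `ℤ²`. -/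
def IsDAB (f g : ℤ × ℤ) : Prop := det2 f g = 1 ∧ 0 ≤ ip2 f g

lemma sq_sum_pos {a b : ℤ} (h : a ≠ 0 ∨ b ≠ 0) : 1 ≤ a ^ 2 + b ^ 2 := by
  have ha := sq_nonneg a; have hb := sq_nonneg b
  rcases h with h | h
  · have : 1 ≤ a ^ 2 := by rcases h.lt_or_gt with h | h <;> nlinarith
    linarith
  · have : 1 ≤ b ^ 2 := by rcases h.lt_or_gt with h | h <;> nlinarith
    linarith

lemma quad_aux (N c s t : ℤ) (hN : 1 ≤ N) (hc : 0 ≤ c) (hs : c + 1 ≤ s)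
    (hQ : 0 ≤ c + t * N - 2 * t * s - t ^ 2 * N) (ht : 1 ≤ t) : False := by
  nlinarith [mul_nonneg (by linarith : (0:ℤ) ≤ t - 1)
      (by nlinarith : (0:ℤ) ≤ N * t),
    mul_nonneg hc (by linarith : (0:ℤ) ≤ t - 1),
    mul_nonneg (by linarith : (0:ℤ) ≤ s - c - 1) (by linarith : (0:ℤ) ≤ t)]

lemma uniq_aux (a b u v t : ℤ) (hdet : u * b - v * a = 1)
    (hc : 0 ≤ u * (a - u) + v * (b - v))
    (hP : 0 ≤ (u + t * a) * (a - (u + t * a)) + (v + t * b) * (b - (v + t * b)))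
    (ht : 1 ≤ t) : False := by
  have hab : a ≠ 0 ∨ b ≠ 0 := by
    by_contra h; push_neg at h; rw [h.1, h.2] at hdet; simp at hdet
  have huv : u ≠ 0 ∨ v ≠ 0 := by
    by_contra h; push_neg at h; rw [h.1, h.2] at hdet; simp at hdet
  have hN : 1 ≤ a ^ 2 + b ^ 2 := sq_sum_pos hab
  have hUV : 1 ≤ u ^ 2 + v ^ 2 := sq_sum_pos huv
  have hs : (u * (a - u) + v * (b - v)) + 1 ≤ u * a + v * b := by nlinarith
  refine quad_aux (a ^ 2 + b ^ 2) (u * (a - u) + v * (b - v)) (u * a + v * b) t hN hc hs ?_ ht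
  have heq : (u * (a - u) + v * (b - v)) + t * (a ^ 2 + b ^ 2) - 2 * t * (u * a + v * b)
      - t ^ 2 * (a ^ 2 + b ^ 2)
      = (u + t * a) * (a - (u + t * a)) + (v + t * b) * (b - (v + t * b)) := by ring
  rw [heq]; exact hP

/-- Stern–Brocot parents for positive coprime pairs. -/
lemma parents : ∀ n a b : ℕ, a + b ≤ n → 0 < a → 0 < b → Nat.gcd a b = 1 →
    ∃ p q r s : ℕ, (p : ℤ) * s - q * r = 1 ∧ p + r = a ∧ q + s = b := by
  intro n
  induction n with
  | zero => intro a b h ha _ _; omega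
  | succ n ih =>
    intro a b hab ha hb hg
    rcases lt_trichotomy a b with h | h | h
    · obtain ⟨p, q, r, s, hd, h1, h2⟩ :=
        ih a (b - a) (by omega) ha (by omega)
          (by rw [Nat.gcd_sub_self_right (by omega)]; exact hg)
      exact ⟨p, p + q, r, r + s, by push_cast; push_cast at hd; ring_nf; ring_nf at hd; linarith,
        by omega, by omega⟩
    · have : a = 1 := by subst h; simpa using hg
      exact ⟨1, 0, 0, 1, by norm_num, by omega, by omega⟩
    · obtain ⟨p, q, r, s, hd, h1, h2⟩ :=
        ih (a - b) b (by omega) (by omega) hb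
          (by rw [Nat.gcd_sub_self_left (by omega)]; exact hg)
      exact ⟨p + q, q, r + s, s, by push_cast; push_cast at hd; ring_nf; ring_nf at hd; linarith,
        by omega, by omega⟩

/-- Existence for positive coordinates. -/
lemma exists_pos (a b : ℤ) (ha : 0 < a) (hb : 0 < b) (hg : Int.gcd a b = 1) :
    ∃ f g : ℤ × ℤ, 0 ≤ f.1 ∧ 0 ≤ f.2 ∧ 0 ≤ g.1 ∧ 0 ≤ g.2 ∧ det2 f g = 1 ∧ f + g = (a, b) := by
  obtain ⟨p, q, r, s, hd, h1, h2⟩ :=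
    parents (a.natAbs + b.natAbs) a.natAbs b.natAbs le_rfl
      (by omega) (by omega) hg
  refine ⟨((p : ℤ), (q : ℤ)), ((r : ℤ), (s : ℤ)), by positivity, by positivity, by positivity,
    by positivity, hd, ?_⟩
  have hA : ((a.natAbs : ℤ)) = a := Int.natAbs_of_nonneg ha.le
  have hB : ((b.natAbs : ℤ)) = b := Int.natAbs_of_nonneg hb.le
  have h1' : (p : ℤ) + r = a := by rw [← hA]; exact_mod_cast congrArg (Nat.cast : ℕ → ℤ) h1
  have h2' : (q : ℤ) + s = b := by rw [← hB]; exact_mod_cast congrArg (Nat.cast : ℕ → ℤ) h2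
  simp [Prod.ext_iff, h1', h2']

lemma gcd_abs (a b : ℤ) : Int.gcd |a| |b| = Int.gcd a b := by
  simp [Int.gcd, Int.natAbs_abs]

/-- Existence in general. -/
lemma exists_dab (a b : ℤ) (hg : Int.gcd a b = 1) (hab : a * b ≠ 0) :
    ∃ f g : ℤ × ℤ, IsDAB f g ∧ f + g = (a, b) := by
  have ha : a ≠ 0 := fun h => hab (by simp [h])
  have hb : b ≠ 0 := fun h => hab (by simp [h])
  rcases lt_or_gt_of_ne ha with ha' | ha' <;> rcases lt_or_gt_of_ne hb with hb' | hb'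
  · -- a < 0, b < 0
    obtain ⟨⟨p, q⟩, ⟨r, s⟩, hp, hq, hr, hs, hd, hsum⟩ := exists_pos (-a) (-b) (by omega) (by omega)
      (by rw [Int.neg_gcd, Int.gcd_neg]; exact hg)
    simp only [det2, ip2] at hd hp hq hr hs
    rw [Prod.mk_add_mk, Prod.mk.injEq] at hsum
    refine ⟨(-p, -q), (-r, -s), ⟨?_, ?_⟩, ?_⟩
    · simp only [det2]; linear_combination hd
    · simp only [ip2]; nlinarith [mul_nonneg hp hr, mul_nonneg hq hs]
    · rw [Prod.mk_add_mk, Prod.mk.injEq]; omega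
  · -- a < 0 < b
    obtain ⟨⟨p, q⟩, ⟨r, s⟩, hp, hq, hr, hs, hd, hsum⟩ := exists_pos (-a) b (by omega) hb'
      (by rw [Int.neg_gcd]; exact hg)
    simp only [det2, ip2] at hd hp hq hr hs
    rw [Prod.mk_add_mk, Prod.mk.injEq] at hsum
    refine ⟨(-r, s), (-p, q), ⟨?_, ?_⟩, ?_⟩
    · simp only [det2]; linear_combination hd
    · simp only [ip2]; nlinarith [mul_nonneg hp hr, mul_nonneg hq hs]
    · rw [Prod.mk_add_mk, Prod.mk.injEq]; omega
  · -- b < 0 < a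
    obtain ⟨⟨p, q⟩, ⟨r, s⟩, hp, hq, hr, hs, hd, hsum⟩ := exists_pos a (-b) ha' (by omega)
      (by rw [Int.gcd_neg]; exact hg)
    simp only [det2, ip2] at hd hp hq hr hs
    rw [Prod.mk_add_mk, Prod.mk.injEq] at hsum
    refine ⟨(r, -s), (p, -q), ⟨?_, ?_⟩, ?_⟩
    · simp only [det2]; linear_combination hd
    · simp only [ip2]; nlinarith [mul_nonneg hp hr, mul_nonneg hq hs]
    · rw [Prod.mk_add_mk, Prod.mk.injEq]; omega
  · -- 0 < a, 0 < b
    obtain ⟨f, g, _, _, _, _, hd, hsum⟩ := exists_pos a b ha' hb' hg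
    exact ⟨f, g, ⟨hd, by simp only [ip2]; positivity⟩, hsum⟩

/-- Uniqueness. -/
lemma uniq_dab (a b : ℤ) (hg : Int.gcd a b = 1) (ha : a ≠ 0)
    (f g f' g' : ℤ × ℤ) (h1 : IsDAB f g) (h2 : f + g = (a, b))
    (h3 : IsDAB f' g') (h4 : f' + g' = (a, b)) : f = f' ∧ g = g' := by
  obtain ⟨x, y⟩ := f; obtain ⟨u, v⟩ := g; obtain ⟨x', y'⟩ := f'; obtain ⟨u', v'⟩ := g'
  rw [Prod.ext_iff] at h2 h4
  simp only [Prod.fst_add, Prod.snd_add] at h2 h4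
  obtain ⟨hs1, hs2⟩ := h2; obtain ⟨hs3, hs4⟩ := h4
  obtain ⟨hd, hip⟩ := h1; obtain ⟨hd', hip'⟩ := h3
  simp only [det2, ip2] at hd hip hd' hip'
  have Hd : x * b - y * a = 1 := by linear_combination hd + y * hs1 - x * hs2
  have Hd' : x' * b - y' * a = 1 := by linear_combination hd' + y' * hs3 - x' * hs4
  have Hip : 0 ≤ x * (a - x) + y * (b - y) := by
    have : x * (a - x) + y * (b - y) = x * u + y * v := by
      rw [show a - x = u by linarith, show b - y = v by linarith]
    linarith [this ▸ hip]
  have Hip' : 0 ≤ x' * (a - x') + y' * (b - y') := by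
    have : x' * (a - x') + y' * (b - y') = x' * u' + y' * v' := by
      rw [show a - x' = u' by linarith, show b - y' = v' by linarith]
    linarith [this ▸ hip']
  have hcop : IsCoprime a b := Int.isCoprime_iff_gcd_eq_one.mpr hg
  have hxb : (x - x') * b = (y - y') * a := by linear_combination Hd - Hd'
  have hdvd : a ∣ (x - x') := hcop.dvd_of_dvd_mul_right ⟨y - y', by linear_combination hxb⟩
  obtain ⟨t, ht⟩ := hdvd
  have hty : y - y' = t * b := by
    have : (y - y') * a = t * b * a := by rw [← hxb, ht]; ring
    exact mul_right_cancel₀ ha this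
  have hteq : t = 0 := by
    rcases lt_trichotomy t 0 with htl | htl | htl
    · exfalso
      refine uniq_aux a b x y (-t) Hd Hip ?_ (by omega)
      rw [show x + -t * a = x' by linarith [ht], show y + -t * b = y' by linarith [hty]]
      exact Hip'
    · exact htl
    · exfalso
      refine uniq_aux a b x' y' t Hd' Hip' ?_ (by omega)
      rw [show x' + t * a = x by linarith [ht], show y' + t * b = y by linarith [hty]]
      exact Hip
  rw [hteq] at ht hty
  constructor <;> rw [Prod.ext_iff] <;> constructor <;> dsimp <;> omega

/-- The identity `e = f + g` is a one-to-one correspondence between vectors `e = (a,b)`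
with `gcd(a,b) = 1`, `a*b ≠ 0`, and direct acute bases `(f,g)` of `ℤ²`. -/
theorem stmt0_decomposition_bijection :
    (∀ e : ℤ × ℤ, Int.gcd e.1 e.2 = 1 → e.1 * e.2 ≠ 0 →
      ∃! fg : (ℤ × ℤ) × (ℤ × ℤ), IsDAB fg.1 fg.2 ∧ fg.1 + fg.2 = e) ∧
    (∀ f g : ℤ × ℤ, IsDAB f g →
      Int.gcd (f + g).1 (f + g).2 = 1 ∧ (f + g).1 * (f + g).2 ≠ 0) := by
  constructor
  · rintro ⟨a, b⟩ hg hab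
    dsimp at hg hab
    obtain ⟨f, g, hdab, hsum⟩ := exists_dab a b hg hab
    refine ⟨⟨f, g⟩, ⟨hdab, hsum⟩, ?_⟩
    rintro ⟨f', g'⟩ ⟨hdab', hsum'⟩
    have ha : a ≠ 0 := fun h => hab (by simp [h])
    obtain ⟨e1, e2⟩ := uniq_dab a b hg ha f' g' f g hdab' hsum' hdab hsum
    simp [Prod.ext_iff, e1, e2]
  · rintro f g ⟨hd, hip⟩
    simp only [det2, ip2] at hd hip
    simp only [Prod.fst_add, Prod.snd_add]
    have key : f.1 * (f.2 + g.2) - f.2 * (f.1 + g.1) = 1 := by linear_combination hd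
    constructor
    · have d1 : (↑(Int.gcd (f.1 + g.1) (f.2 + g.2)) : ℤ) ∣ f.1 + g.1 := Int.gcd_dvd_left _ _
      have d2 : (↑(Int.gcd (f.1 + g.1) (f.2 + g.2)) : ℤ) ∣ f.2 + g.2 := Int.gcd_dvd_right _ _
      have : (↑(Int.gcd (f.1 + g.1) (f.2 + g.2)) : ℤ) ∣ 1 := by
        rw [← key]; exact dvd_sub (Dvd.dvd.mul_left d2 _) (Dvd.dvd.mul_left d1 _)
      have h1 := Int.eq_one_of_dvd_one (by positivity) this
      exact_mod_cast h1
    · intro hzero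
      rcases mul_eq_zero.mp hzero with h0 | h0
      · -- f.1 + g.1 = 0
        have hf1 : f.1 * (f.2 + g.2) = 1 := by linear_combination key + f.2 * h0
        rcases Int.eq_one_or_neg_one_of_mul_eq_one' hf1 with ⟨ha1, hb1⟩ | ⟨ha1, hb1⟩ <;>
          nlinarith [sq_nonneg (f.2 - g.2), sq_nonneg (f.2 + g.2), hip, h0, ha1, hb1]
      · -- f.2 + g.2 = 0
        have hf2 : (-f.2) * (f.1 + g.1) = 1 := by linear_combination hd - f.1 * h0
        rcases Int.eq_one_or_neg_one_of_mul_eq_one' hf2 with ⟨ha1, hb1⟩ | ⟨ha1, hb1⟩ <;>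
          nlinarith [sq_nonneg (f.1 - g.1), sq_nonneg (f.1 + g.1), hip, h0, ha1, hb1]
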